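/- Let a ∈ ℂ, a ≠ 0, and let φ, ψ : ℝ × ℝ → ℂ be twice continuously differentiable functions such that for all (t,x) ∈ ℝ²: ∂ₓψ(t,x) − ∂ₜφ(t,x) = (1/a)·sin((ψ(t,x)+φ(t,x))/2) + a·sin((ψ(t,x)−φ(t,x))/2) and ∂ₜψ(t,x) − ∂ₓφ(t,x) = (1/a)·sin((ψ(t,x)+φ(t,x))/2) − a·sin((ψ(t,x)−φ(t,x))/2). Then both functions solve the complex sine-Gordon equation: ∂ₜₜψ − ∂ₓₓψ + sin ψ = 0 and ∂ₜₜφ − ∂ₓₓφ + sin φ = 0 everywhere on ℝ². -/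

import Mathlib

open Complex

private lemma hasDerivAt_csin' {g : ℝ → ℂ} {g' : ℂ} {t : ℝ} (hg : HasDerivAt g g' t) :
    HasDerivAt (fun s => Complex.sin (g s)) (Complex.cos (g t) * g') t := by
  have h := ((Complex.hasDerivAt_sin (g t)).hasFDerivAt.restrictScalars ℝ).comp_hasDerivAt t hg
  simpa [mul_comm, Function.comp_def] using h

section
variable {f : ℝ × ℝ → ℂ}

private lemma sliceT (hf : Differentiable ℝ f) (t x : ℝ) :
    HasDerivAt (fun s => f (s, x)) (fderiv ℝ f (t, x) (1, 0)) t :=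
  ((hf (t,x)).hasFDerivAt).comp_hasDerivAt t ((hasDerivAt_id t).prodMk (hasDerivAt_const t x))

private lemma sliceX (hf : Differentiable ℝ f) (t x : ℝ) :
    HasDerivAt (fun y => f (t, y)) (fderiv ℝ f (t, x) (0, 1)) x :=
  ((hf (t,x)).hasFDerivAt).comp_hasDerivAt x ((hasDerivAt_const x t).prodMk (hasDerivAt_id x))

private lemma fderiv_C1 (hf : ContDiff ℝ 2 f) : ContDiff ℝ 1 (fderiv ℝ f) :=
  hf.fderiv_right (by norm_num)

private lemma evalDiff (hf : ContDiff ℝ 2 f) (v : ℝ × ℝ) (p : ℝ × ℝ) :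
    HasFDerivAt (fun q => fderiv ℝ f q v)
      ((ContinuousLinearMap.apply ℝ ℂ v).comp (fderiv ℝ (fderiv ℝ f) p)) p := by
  have h2 : HasFDerivAt (fderiv ℝ f) (fderiv ℝ (fderiv ℝ f) p) p :=
    ((fderiv_C1 hf).differentiable one_ne_zero p).hasFDerivAt
  exact (ContinuousLinearMap.apply ℝ ℂ v).hasFDerivAt.comp p h2

private lemma slice2T (hf : ContDiff ℝ 2 f) (v : ℝ × ℝ) (t x : ℝ) :
    HasDerivAt (fun s => fderiv ℝ f (s, x) v) (fderiv ℝ (fderiv ℝ f) (t, x) (1, 0) v) t := by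
  simpa [Function.comp_def] using (evalDiff hf v (t,x)).comp_hasDerivAt t ((hasDerivAt_id t).prodMk (hasDerivAt_const t x))

private lemma slice2X (hf : ContDiff ℝ 2 f) (v : ℝ × ℝ) (t x : ℝ) :
    HasDerivAt (fun y => fderiv ℝ f (t, y) v) (fderiv ℝ (fderiv ℝ f) (t, x) (0, 1) v) x := by
  simpa [Function.comp_def] using (evalDiff hf v (t,x)).comp_hasDerivAt x ((hasDerivAt_const x t).prodMk (hasDerivAt_id x))

private lemma symm2 (hf : ContDiff ℝ 2 f) (p v w : ℝ × ℝ) :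
    fderiv ℝ (fderiv ℝ f) p v w = fderiv ℝ (fderiv ℝ f) p w v :=
  second_derivative_symmetric
    (fun y => (hf.differentiable (by norm_num) y).hasFDerivAt)
    (((fderiv_C1 hf).differentiable one_ne_zero p).hasFDerivAt) v w
end

/-- **Bäcklund transformations produce sine-Gordon solutions.**
If `φ`, `ψ : ℝ × ℝ → ℂ` are twice continuously differentiable and related by the
Bäcklund transformation equations with parameter `a ≠ 0`, then both solve the
complex sine-Gordon equation `∂ₜₜu − ∂ₓₓu + sin u = 0`. -/
theorem backlund_implies_sineGordon (a : ℂ) (ha : a ≠ 0) (φ ψ : ℝ → ℝ → ℂ)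
    (hφ : ContDiff ℝ 2 (fun p : ℝ × ℝ => φ p.1 p.2))
    (hψ : ContDiff ℝ 2 (fun p : ℝ × ℝ => ψ p.1 p.2))
    (hBT1 : ∀ t x : ℝ,
      deriv (fun y => ψ t y) x - deriv (fun s => φ s x) t
        = (1 / a) * Complex.sin ((ψ t x + φ t x) / 2)
          + a * Complex.sin ((ψ t x - φ t x) / 2))
    (hBT2 : ∀ t x : ℝ,
      deriv (fun s => ψ s x) t - deriv (fun y => φ t y) x
        = (1 / a) * Complex.sin ((ψ t x + φ t x) / 2)
          - a * Complex.sin ((ψ t x - φ t x) / 2)) :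
    (∀ t x : ℝ,
      deriv (fun s => deriv (fun s' => ψ s' x) s) t
        - deriv (fun y => deriv (fun y' => ψ t y') y) x
        + Complex.sin (ψ t x) = 0) ∧
    (∀ t x : ℝ,
      deriv (fun s => deriv (fun s' => φ s' x) s) t
        - deriv (fun y => deriv (fun y' => φ t y') y) x
        + Complex.sin (φ t x) = 0) := by
  have hΨd : Differentiable ℝ (fun p : ℝ × ℝ => ψ p.1 p.2) := hψ.differentiable (by norm_num)
  have hΦd : Differentiable ℝ (fun p : ℝ × ℝ => φ p.1 p.2) := hφ.differentiable (by norm_num)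
  -- fderiv form of the Bäcklund equations
  have E1 : ∀ t x : ℝ,
      fderiv ℝ (fun p : ℝ × ℝ => ψ p.1 p.2) (t, x) (0, 1)
        - fderiv ℝ (fun p : ℝ × ℝ => φ p.1 p.2) (t, x) (1, 0)
        = (1 / a) * Complex.sin ((ψ t x + φ t x) / 2)
          + a * Complex.sin ((ψ t x - φ t x) / 2) := by
    intro t x
    have h3 := hBT1 t x
    rw [(sliceX hΨd t x).deriv, (sliceT hΦd t x).deriv] at h3
    exact h3
  have E2 : ∀ t x : ℝ,
      fderiv ℝ (fun p : ℝ × ℝ => ψ p.1 p.2) (t, x) (1, 0)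
        - fderiv ℝ (fun p : ℝ × ℝ => φ p.1 p.2) (t, x) (0, 1)
        = (1 / a) * Complex.sin ((ψ t x + φ t x) / 2)
          - a * Complex.sin ((ψ t x - φ t x) / 2) := by
    intro t x
    have h3 := hBT2 t x
    rw [(sliceT hΨd t x).deriv, (sliceX hΦd t x).deriv] at h3
    exact h3
  constructor
  · intro t x
    -- second-derivative rewrites
    have d2t : deriv (fun s => deriv (fun s' => ψ s' x) s) t
        = fderiv ℝ (fderiv ℝ (fun p : ℝ × ℝ => ψ p.1 p.2)) (t, x) (1, 0) (1, 0) := by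
      have h1 : (fun s => deriv (fun s' => ψ s' x) s)
          = fun s => fderiv ℝ (fun p : ℝ × ℝ => ψ p.1 p.2) (s, x) (1, 0) :=
        funext fun s => (sliceT hΨd s x).deriv
      rw [h1, (slice2T hψ (1, 0) t x).deriv]
    have d2x : deriv (fun y => deriv (fun y' => ψ t y') y) x
        = fderiv ℝ (fderiv ℝ (fun p : ℝ × ℝ => ψ p.1 p.2)) (t, x) (0, 1) (0, 1) := by
      have h1 : (fun y => deriv (fun y' => ψ t y') y)
          = fun y => fderiv ℝ (fun p : ℝ × ℝ => ψ p.1 p.2) (t, y) (0, 1) :=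
        funext fun y => (sliceX hΨd t y).deriv
      rw [h1, (slice2X hψ (0, 1) t x).deriv]
    rw [d2t, d2x]
    -- directional derivative of BT2 in t-direction (eq4)
    have hu_t : HasDerivAt (fun s => (ψ s x + φ s x) / 2)
        ((fderiv ℝ (fun p : ℝ × ℝ => ψ p.1 p.2) (t, x) (1, 0)
          + fderiv ℝ (fun p : ℝ × ℝ => φ p.1 p.2) (t, x) (1, 0)) / 2) t :=
      ((sliceT hΨd t x).add (sliceT hΦd t x)).div_const 2
    have hv_t : HasDerivAt (fun s => (ψ s x - φ s x) / 2)
        ((fderiv ℝ (fun p : ℝ × ℝ => ψ p.1 p.2) (t, x) (1, 0)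
          - fderiv ℝ (fun p : ℝ × ℝ => φ p.1 p.2) (t, x) (1, 0)) / 2) t :=
      ((sliceT hΨd t x).sub (sliceT hΦd t x)).div_const 2
    have hu_x : HasDerivAt (fun y => (ψ t y + φ t y) / 2)
        ((fderiv ℝ (fun p : ℝ × ℝ => ψ p.1 p.2) (t, x) (0, 1)
          + fderiv ℝ (fun p : ℝ × ℝ => φ p.1 p.2) (t, x) (0, 1)) / 2) x :=
      ((sliceX hΨd t x).add (sliceX hΦd t x)).div_const 2
    have hv_x : HasDerivAt (fun y => (ψ t y - φ t y) / 2)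
        ((fderiv ℝ (fun p : ℝ × ℝ => ψ p.1 p.2) (t, x) (0, 1)
          - fderiv ℝ (fun p : ℝ × ℝ => φ p.1 p.2) (t, x) (0, 1)) / 2) x :=
      ((sliceX hΨd t x).sub (sliceX hΦd t x)).div_const 2
    have eq4 : fderiv ℝ (fderiv ℝ (fun p : ℝ × ℝ => ψ p.1 p.2)) (t, x) (1, 0) (1, 0)
        - fderiv ℝ (fderiv ℝ (fun p : ℝ × ℝ => φ p.1 p.2)) (t, x) (1, 0) (0, 1)
        = (1 / a) * (Complex.cos ((ψ t x + φ t x) / 2)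
            * ((fderiv ℝ (fun p : ℝ × ℝ => ψ p.1 p.2) (t, x) (1, 0)
              + fderiv ℝ (fun p : ℝ × ℝ => φ p.1 p.2) (t, x) (1, 0)) / 2))
          - a * (Complex.cos ((ψ t x - φ t x) / 2)
            * ((fderiv ℝ (fun p : ℝ × ℝ => ψ p.1 p.2) (t, x) (1, 0)
              - fderiv ℝ (fun p : ℝ × ℝ => φ p.1 p.2) (t, x) (1, 0)) / 2)) := by
      have hL := (slice2T hψ (1, 0) t x).sub (slice2T hφ (0, 1) t x)
      have hR := ((hasDerivAt_csin' hu_t).const_mul (1 / a)).sub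
        ((hasDerivAt_csin' hv_t).const_mul a)
      have hfun : (fun s => fderiv ℝ (fun p : ℝ × ℝ => ψ p.1 p.2) (s, x) (1, 0)
            - fderiv ℝ (fun p : ℝ × ℝ => φ p.1 p.2) (s, x) (0, 1))
          = fun s => (1 / a) * Complex.sin ((ψ s x + φ s x) / 2)
            - a * Complex.sin ((ψ s x - φ s x) / 2) :=
        funext fun s => E2 s x
      simp only [Pi.sub_def] at hL
      rw [hfun] at hL
      exact hL.unique hR
    have eq3 : fderiv ℝ (fderiv ℝ (fun p : ℝ × ℝ => ψ p.1 p.2)) (t, x) (0, 1) (0, 1)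
        - fderiv ℝ (fderiv ℝ (fun p : ℝ × ℝ => φ p.1 p.2)) (t, x) (0, 1) (1, 0)
        = (1 / a) * (Complex.cos ((ψ t x + φ t x) / 2)
            * ((fderiv ℝ (fun p : ℝ × ℝ => ψ p.1 p.2) (t, x) (0, 1)
              + fderiv ℝ (fun p : ℝ × ℝ => φ p.1 p.2) (t, x) (0, 1)) / 2))
          + a * (Complex.cos ((ψ t x - φ t x) / 2)
            * ((fderiv ℝ (fun p : ℝ × ℝ => ψ p.1 p.2) (t, x) (0, 1)
              - fderiv ℝ (fun p : ℝ × ℝ => φ p.1 p.2) (t, x) (0, 1)) / 2)) := by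
      have hL := (slice2X hψ (0, 1) t x).sub (slice2X hφ (1, 0) t x)
      have hR := ((hasDerivAt_csin' hu_x).const_mul (1 / a)).add
        ((hasDerivAt_csin' hv_x).const_mul a)
      have hfun : (fun y => fderiv ℝ (fun p : ℝ × ℝ => ψ p.1 p.2) (t, y) (0, 1)
            - fderiv ℝ (fun p : ℝ × ℝ => φ p.1 p.2) (t, y) (1, 0))
          = fun y => (1 / a) * Complex.sin ((ψ t y + φ t y) / 2)
            + a * Complex.sin ((ψ t y - φ t y) / 2) :=
        funext fun y => E1 t y
      simp only [Pi.sub_def] at hL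
      rw [hfun] at hL
      exact hL.unique hR
    have hsymmB := symm2 hφ (t, x) ((1 : ℝ), (0 : ℝ)) ((0 : ℝ), (1 : ℝ))
    have e1 := E1 t x
    have e2 := E2 t x
    have hab : a * (1 / a) = 1 := by field_simp
    have hsin : Complex.sin (ψ t x)
        = Complex.sin ((ψ t x + φ t x) / 2) * Complex.cos ((ψ t x - φ t x) / 2)
          + Complex.cos ((ψ t x + φ t x) / 2) * Complex.sin ((ψ t x - φ t x) / 2) := by
      rw [← Complex.sin_add]; ring_nf
    rw [hsin]
    linear_combination eq4 - eq3 + hsymmB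
      - ((1 / a) * Complex.cos ((ψ t x + φ t x) / 2) / 2
          + a * Complex.cos ((ψ t x - φ t x) / 2) / 2) * e1
      + ((1 / a) * Complex.cos ((ψ t x + φ t x) / 2) / 2
          - a * Complex.cos ((ψ t x - φ t x) / 2) / 2) * e2
      - (Complex.cos ((ψ t x + φ t x) / 2) * Complex.sin ((ψ t x - φ t x) / 2)
          + Complex.cos ((ψ t x - φ t x) / 2) * Complex.sin ((ψ t x + φ t x) / 2)) * hab
  · intro t x
    have d2t : deriv (fun s => deriv (fun s' => φ s' x) s) t
        = fderiv ℝ (fderiv ℝ (fun p : ℝ × ℝ => φ p.1 p.2)) (t, x) (1, 0) (1, 0) := by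
      have h1 : (fun s => deriv (fun s' => φ s' x) s)
          = fun s => fderiv ℝ (fun p : ℝ × ℝ => φ p.1 p.2) (s, x) (1, 0) :=
        funext fun s => (sliceT hΦd s x).deriv
      rw [h1, (slice2T hφ (1, 0) t x).deriv]
    have d2x : deriv (fun y => deriv (fun y' => φ t y') y) x
        = fderiv ℝ (fderiv ℝ (fun p : ℝ × ℝ => φ p.1 p.2)) (t, x) (0, 1) (0, 1) := by
      have h1 : (fun y => deriv (fun y' => φ t y') y)
          = fun y => fderiv ℝ (fun p : ℝ × ℝ => φ p.1 p.2) (t, y) (0, 1) :=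
        funext fun y => (sliceX hΦd t y).deriv
      rw [h1, (slice2X hφ (0, 1) t x).deriv]
    rw [d2t, d2x]
    have hu_t : HasDerivAt (fun s => (ψ s x + φ s x) / 2)
        ((fderiv ℝ (fun p : ℝ × ℝ => ψ p.1 p.2) (t, x) (1, 0)
          + fderiv ℝ (fun p : ℝ × ℝ => φ p.1 p.2) (t, x) (1, 0)) / 2) t :=
      ((sliceT hΨd t x).add (sliceT hΦd t x)).div_const 2
    have hv_t : HasDerivAt (fun s => (ψ s x - φ s x) / 2)
        ((fderiv ℝ (fun p : ℝ × ℝ => ψ p.1 p.2) (t, x) (1, 0)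
          - fderiv ℝ (fun p : ℝ × ℝ => φ p.1 p.2) (t, x) (1, 0)) / 2) t :=
      ((sliceT hΨd t x).sub (sliceT hΦd t x)).div_const 2
    have hu_x : HasDerivAt (fun y => (ψ t y + φ t y) / 2)
        ((fderiv ℝ (fun p : ℝ × ℝ => ψ p.1 p.2) (t, x) (0, 1)
          + fderiv ℝ (fun p : ℝ × ℝ => φ p.1 p.2) (t, x) (0, 1)) / 2) x :=
      ((sliceX hΨd t x).add (sliceX hΦd t x)).div_const 2
    have hv_x : HasDerivAt (fun y => (ψ t y - φ t y) / 2)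
        ((fderiv ℝ (fun p : ℝ × ℝ => ψ p.1 p.2) (t, x) (0, 1)
          - fderiv ℝ (fun p : ℝ × ℝ => φ p.1 p.2) (t, x) (0, 1)) / 2) x :=
      ((sliceX hΨd t x).sub (sliceX hΦd t x)).div_const 2
    have eq1 : fderiv ℝ (fderiv ℝ (fun p : ℝ × ℝ => ψ p.1 p.2)) (t, x) (1, 0) (0, 1)
        - fderiv ℝ (fderiv ℝ (fun p : ℝ × ℝ => φ p.1 p.2)) (t, x) (1, 0) (1, 0)
        = (1 / a) * (Complex.cos ((ψ t x + φ t x) / 2)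
            * ((fderiv ℝ (fun p : ℝ × ℝ => ψ p.1 p.2) (t, x) (1, 0)
              + fderiv ℝ (fun p : ℝ × ℝ => φ p.1 p.2) (t, x) (1, 0)) / 2))
          + a * (Complex.cos ((ψ t x - φ t x) / 2)
            * ((fderiv ℝ (fun p : ℝ × ℝ => ψ p.1 p.2) (t, x) (1, 0)
              - fderiv ℝ (fun p : ℝ × ℝ => φ p.1 p.2) (t, x) (1, 0)) / 2)) := by
      have hL := (slice2T hψ (0, 1) t x).sub (slice2T hφ (1, 0) t x)
      have hR := ((hasDerivAt_csin' hu_t).const_mul (1 / a)).add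
        ((hasDerivAt_csin' hv_t).const_mul a)
      have hfun : (fun s => fderiv ℝ (fun p : ℝ × ℝ => ψ p.1 p.2) (s, x) (0, 1)
            - fderiv ℝ (fun p : ℝ × ℝ => φ p.1 p.2) (s, x) (1, 0))
          = fun s => (1 / a) * Complex.sin ((ψ s x + φ s x) / 2)
            + a * Complex.sin ((ψ s x - φ s x) / 2) :=
        funext fun s => E1 s x
      simp only [Pi.sub_def] at hL
      rw [hfun] at hL
      exact hL.unique hR
    have eq2 : fderiv ℝ (fderiv ℝ (fun p : ℝ × ℝ => ψ p.1 p.2)) (t, x) (0, 1) (1, 0)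
        - fderiv ℝ (fderiv ℝ (fun p : ℝ × ℝ => φ p.1 p.2)) (t, x) (0, 1) (0, 1)
        = (1 / a) * (Complex.cos ((ψ t x + φ t x) / 2)
            * ((fderiv ℝ (fun p : ℝ × ℝ => ψ p.1 p.2) (t, x) (0, 1)
              + fderiv ℝ (fun p : ℝ × ℝ => φ p.1 p.2) (t, x) (0, 1)) / 2))
          - a * (Complex.cos ((ψ t x - φ t x) / 2)
            * ((fderiv ℝ (fun p : ℝ × ℝ => ψ p.1 p.2) (t, x) (0, 1)
              - fderiv ℝ (fun p : ℝ × ℝ => φ p.1 p.2) (t, x) (0, 1)) / 2)) := by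
      have hL := (slice2X hψ (1, 0) t x).sub (slice2X hφ (0, 1) t x)
      have hR := ((hasDerivAt_csin' hu_x).const_mul (1 / a)).sub
        ((hasDerivAt_csin' hv_x).const_mul a)
      have hfun : (fun y => fderiv ℝ (fun p : ℝ × ℝ => ψ p.1 p.2) (t, y) (1, 0)
            - fderiv ℝ (fun p : ℝ × ℝ => φ p.1 p.2) (t, y) (0, 1))
          = fun y => (1 / a) * Complex.sin ((ψ t y + φ t y) / 2)
            - a * Complex.sin ((ψ t y - φ t y) / 2) :=
        funext fun y => E2 t y
      simp only [Pi.sub_def] at hL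
      rw [hfun] at hL
      exact hL.unique hR
    have hsymmA := symm2 hψ (t, x) ((1 : ℝ), (0 : ℝ)) ((0 : ℝ), (1 : ℝ))
    have e1 := E1 t x
    have e2 := E2 t x
    have hab : a * (1 / a) = 1 := by field_simp
    have hsin : Complex.sin (φ t x)
        = Complex.sin ((ψ t x + φ t x) / 2) * Complex.cos ((ψ t x - φ t x) / 2)
          - Complex.cos ((ψ t x + φ t x) / 2) * Complex.sin ((ψ t x - φ t x) / 2) := by
      rw [← Complex.sin_sub]; ring_nf
    rw [hsin]
    linear_combination eq2 - eq1 + hsymmA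
      + ((1 / a) * Complex.cos ((ψ t x + φ t x) / 2) / 2
          - a * Complex.cos ((ψ t x - φ t x) / 2) / 2) * e1
      - ((1 / a) * Complex.cos ((ψ t x + φ t x) / 2) / 2
          + a * Complex.cos ((ψ t x - φ t x) / 2) / 2) * e2
      + (Complex.cos ((ψ t x + φ t x) / 2) * Complex.sin ((ψ t x - φ t x) / 2)
          - Complex.cos ((ψ t x - φ t x) / 2) * Complex.sin ((ψ t x + φ t x) / 2)) * hab
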